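/- Assume the Setup. Let L ∈ A satisfy condition (2), let U ⊆ M be a k-subspace satisfying condition (1) for L, and set Q := {q ∈ R : q·U ⊆ U}. For nonzero q ∈ Q let N_q (respectively N_{q,0}) denote the smallest integer with ad_{L}^{N_q+1}(q) = 0 (respectively ad_{L₀}^{N_{q,0}+1}(q) = 0). Then for all nonzero q, q′ ∈ Q: the product qq′ lies in Q, N_{qq′} = N_q + N_{q′} and N_{qq′,0} = N_{q,0} + N_{q′,0}, and moreover ad_{L}^{N_q+N_{q′}}(qq′) = C(N_q+N_{q′}, N_q)·ad_{L}^{N_q}(q)·ad_{L}^{N_{q′}}(q′) and ad_{L₀}^{N_{q,0}+N_{q′,0}}(qq′) = C(N_{q,0}+N_{q′,0}, N_{q,0})·ad_{L₀}^{N_{q,0}}(q)·ad_{L₀}^{N_{q′,0}}(q′). Equivalently, setting L_q := ad_{L}^{N_q}(q)/N_q! and L_{q,0} := ad_{L₀}^{N_{q,0}}(q)/N_{q,0}!, one has L_{qq′} = L_q·L_{q′} and L_{qq′,0} = L_{q,0}·L_{q′,0}. -/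

import Mathlib

/-- `adOp a b x = a*x - x*b`, the operator `ad_{a,b}`. -/
def adOp {A : Type*} [Ring A] (a b : A) : A → A := fun x => a * x - x * b

/-- The ad-nilpotency degree of `b` with respect to `L₀`:
the smallest `n` with `ad_{L₀}^[n+1] b = 0`. -/
noncomputable def degAd {A : Type*} [Ring A] (L₀ b : A) : ℕ :=
  sInf {n : ℕ | (adOp L₀ L₀)^[n + 1] b = 0}

/-- Condition (2) of Theorem 4.4: `L = L₀` or `deg(L - L₀) < 0`, expressed via some `s' ∈ S`
with `s'(L - L₀)` a nonzero element of `B` of `ad_{L₀}`-degree smaller than that of `s'`. -/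
def cond2 {k A : Type*} [CommSemiring k] [Ring A] [Algebra k A]
    (B : Subalgebra k A) (S : Set A) (L₀ L : A) : Prop :=
  L = L₀ ∨ ∃ s' ∈ S, s' * (L - L₀) ∈ B ∧ s' * (L - L₀) ≠ 0 ∧
    degAd L₀ (s' * (L - L₀)) < degAd L₀ s'

/-- A `k`-subspace of the `A`-module `M` (with `k` acting through `algebraMap k A`). -/
def isSubspace (k A : Type*) {M : Type*} [CommSemiring k] [Ring A] [Algebra k A]
    [AddCommGroup M] [Module A M] (U : Set M) : Prop :=
  (0 : M) ∈ U ∧ (∀ u ∈ U, ∀ v ∈ U, u + v ∈ U) ∧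
    (∀ c : k, ∀ u ∈ U, (algebraMap k A c) • u ∈ U)

section adAux
variable {A' : Type*} [Ring A'] (L : A')

lemma adOp_add (x y : A') : adOp L L (x + y) = adOp L L x + adOp L L y := by
  simp only [adOp]; noncomm_ring

lemma adOp_mul (x y : A') : adOp L L (x * y) = adOp L L x * y + x * adOp L L y := by
  simp only [adOp]; noncomm_ring

lemma adOp_zero : adOp L L 0 = 0 := by simp [adOp]

lemma adOp_iter_zero (n : ℕ) : (adOp L L)^[n] 0 = 0 := by
  induction n with
  | zero => rfl
  | succ n ih => rw [Function.iterate_succ_apply, adOp_zero, ih]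

lemma adOp_nsmul (m : ℕ) (x : A') : adOp L L (m • x) = m • adOp L L x := by
  induction m with
  | zero => simp [adOp_zero]
  | succ m ih => rw [succ_nsmul, adOp_add, ih, succ_nsmul]

lemma adOp_sum {ι : Type*} (s : Finset ι) (g : ι → A') :
    adOp L L (∑ i ∈ s, g i) = ∑ i ∈ s, adOp L L (g i) := by
  classical
  induction s using Finset.induction with
  | empty => simp [adOp_zero]
  | insert _ _ h ih => simp [Finset.sum_insert h, adOp_add, ih]

lemma adOp_iter_vanish {a : ℕ} {x : A'} (h : (adOp L L)^[a] x = 0) {m : ℕ} (hm : a ≤ m) :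
    (adOp L L)^[m] x = 0 := by
  obtain ⟨c, rfl⟩ := Nat.exists_eq_add_of_le hm
  rw [Nat.add_comm, Function.iterate_add_apply, h, adOp_iter_zero]

lemma adOp_leibniz (x y : A') (n : ℕ) :
    (adOp L L)^[n] (x * y) =
      ∑ i ∈ Finset.range (n + 1),
        n.choose i • ((adOp L L)^[i] x * (adOp L L)^[n - i] y) := by
  induction n with
  | zero => simp
  | succ n ih =>
    have key : ∀ i ∈ Finset.range (n + 1),
        adOp L L (n.choose i • ((adOp L L)^[i] x * (adOp L L)^[n - i] y))
          = n.choose i • ((adOp L L)^[i + 1] x * (adOp L L)^[n + 1 - (i + 1)] y)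
            + n.choose i • ((adOp L L)^[i] x * (adOp L L)^[n + 1 - i] y) := by
      intro i hi
      rw [Finset.mem_range, Nat.lt_succ_iff] at hi
      have e1 : n + 1 - (i + 1) = n - i := by omega
      have e2 : n + 1 - i = (n - i) + 1 := by omega
      rw [e1, e2, adOp_nsmul, adOp_mul, smul_add, Function.iterate_succ_apply',
        Function.iterate_succ_apply']
    rw [Function.iterate_succ_apply', ih, adOp_sum, Finset.sum_congr rfl key,
      Finset.sum_add_distrib]
    have hrhs : ∑ i ∈ Finset.range (n + 2),
        (n + 1).choose i • ((adOp L L)^[i] x * (adOp L L)^[n + 1 - i] y)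
        = (∑ i ∈ Finset.range (n + 1),
            n.choose i • ((adOp L L)^[i + 1] x * (adOp L L)^[n + 1 - (i + 1)] y))
          + ∑ i ∈ Finset.range (n + 1),
            n.choose i • ((adOp L L)^[i] x * (adOp L L)^[n + 1 - i] y) := by
      rw [Finset.sum_range_succ' _ (n + 1)]
      have pascal : ∀ i ∈ Finset.range (n + 1),
          (n + 1).choose (i + 1) • ((adOp L L)^[i + 1] x * (adOp L L)^[n + 1 - (i + 1)] y)
            = n.choose i • ((adOp L L)^[i + 1] x * (adOp L L)^[n + 1 - (i + 1)] y)
              + n.choose (i + 1) • ((adOp L L)^[i + 1] x * (adOp L L)^[n + 1 - (i + 1)] y) := by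
        intro i _
        rw [Nat.choose_succ_succ, add_nsmul]
      rw [Finset.sum_congr rfl pascal, Finset.sum_add_distrib]
      have h2 : (∑ i ∈ Finset.range (n + 1),
            n.choose (i + 1) • ((adOp L L)^[i + 1] x * (adOp L L)^[n + 1 - (i + 1)] y))
          + (n + 1).choose 0 • ((adOp L L)^[0] x * (adOp L L)^[n + 1 - 0] y)
          = ∑ i ∈ Finset.range (n + 1),
            n.choose i • ((adOp L L)^[i] x * (adOp L L)^[n + 1 - i] y) := by
        have h0 : (n + 1).choose 0 = n.choose 0 := by simp
        rw [h0,
          ← Finset.sum_range_succ' (fun i => n.choose i • ((adOp L L)^[i] x * (adOp L L)^[n + 1 - i] y)) (n + 1),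
          Finset.sum_range_succ]
        simp [Nat.choose_succ_self]
      rw [add_assoc, h2]
    rw [hrhs]

lemma adOp_top (x y : A') {a b : ℕ} (hx : (adOp L L)^[a + 1] x = 0)
    (hy : (adOp L L)^[b + 1] y = 0) :
    (adOp L L)^[a + b] (x * y) = (a + b).choose a • ((adOp L L)^[a] x * (adOp L L)^[b] y) := by
  rw [adOp_leibniz]
  have := Finset.sum_eq_single_of_mem (s := Finset.range (a + b + 1))
    (f := fun i => (a + b).choose i • ((adOp L L)^[i] x * (adOp L L)^[a + b - i] y)) a
    (by rw [Finset.mem_range]; omega) ?_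
  · rw [this]
    show (a + b).choose a • ((adOp L L)^[a] x * (adOp L L)^[a + b - a] y) = _
    rw [Nat.add_sub_cancel_left]
  · intro i hi hne
    show (a + b).choose i • ((adOp L L)^[i] x * (adOp L L)^[a + b - i] y) = 0
    rw [Finset.mem_range] at hi
    rcases lt_or_gt_of_ne hne with h | h
    · have hz : (adOp L L)^[a + b - i] y = 0 := adOp_iter_vanish L hy (by omega)
      rw [hz, mul_zero, smul_zero]
    · have hz : (adOp L L)^[i] x = 0 := adOp_iter_vanish L hx (by omega)
      rw [hz, zero_mul, smul_zero]

lemma adOp_top_succ (x y : A') {a b : ℕ} (hx : (adOp L L)^[a + 1] x = 0)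
    (hy : (adOp L L)^[b + 1] y = 0) :
    (adOp L L)^[a + b + 1] (x * y) = 0 := by
  rw [adOp_leibniz]
  apply Finset.sum_eq_zero
  intro i hi
  rw [Finset.mem_range] at hi
  by_cases h : i ≤ a
  · have hz : (adOp L L)^[a + b + 1 - i] y = 0 := adOp_iter_vanish L hy (by omega)
    rw [hz, mul_zero, smul_zero]
  · have hz : (adOp L L)^[i] x = 0 := adOp_iter_vanish L hx (by omega)
    rw [hz, zero_mul, smul_zero]
end adAux

lemma adCz (k A : Type*) [Field k] [CharZero k] [Ring A] [IsDomain A] [Algebra k A] :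
    CharZero A := charZero_of_injective_algebraMap (algebraMap k A).injective

lemma adOp_top_ne_zero (k : Type*) {A : Type*} [Field k] [CharZero k] [Ring A] [IsDomain A]
    [Algebra k A] (L x y : A) {a b : ℕ}
    (hx1 : (adOp L L)^[a + 1] x = 0) (hx2 : (adOp L L)^[a] x ≠ 0)
    (hy1 : (adOp L L)^[b + 1] y = 0) (hy2 : (adOp L L)^[b] y ≠ 0) :
    (adOp L L)^[a + b] (x * y) ≠ 0 := by
  have : CharZero A := adCz k A
  rw [adOp_top L x y hx1 hy1, nsmul_eq_mul]
  exact mul_ne_zero (Nat.cast_ne_zero.2 (Nat.choose_pos (Nat.le_add_right a b)).ne')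
    (mul_ne_zero hx2 hy2)

lemma adOp_factorial_mul (k : Type*) {A : Type*} [Field k] [CharZero k] [Ring A] [IsDomain A]
    [Algebra k A] (L x y Lx Ly Lxy : A) {a b : ℕ}
    (hx1 : (adOp L L)^[a + 1] x = 0) (hy1 : (adOp L L)^[b + 1] y = 0)
    (h1 : a.factorial • Lx = (adOp L L)^[a] x)
    (h2 : b.factorial • Ly = (adOp L L)^[b] y)
    (h3 : (a + b).factorial • Lxy = (adOp L L)^[a + b] (x * y)) :
    Lxy = Lx * Ly := by
  have : CharZero A := adCz k A
  have key : (a + b).factorial • Lxy = (a + b).factorial • (Lx * Ly) := by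
    have hfac : (a + b).choose a * a.factorial * b.factorial = (a + b).factorial := by
      have h := Nat.choose_mul_factorial_mul_factorial (Nat.le_add_right a b)
      simpa [Nat.add_sub_cancel_left] using h
    rw [h3, adOp_top L x y hx1 hy1, ← h1, ← h2, smul_mul_smul_comm, smul_smul,
      ← Nat.mul_assoc, hfac]
  have hne : ((a + b).factorial : A) ≠ 0 :=
    Nat.cast_ne_zero.2 (Nat.factorial_ne_zero _)
  rw [nsmul_eq_mul, nsmul_eq_mul] at key
  exact mul_left_cancel₀ hne key

/-- Multiplicativity underlying Corollary 4.10: for nonzero `q, q' ∈ Q = {q ∈ R : q·U ⊆ U}`,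
with `N_q` (resp. `N_{q,0}`) the smallest exponent killing `q` under `ad_L` (resp. `ad_{L₀}`),
one has `qq' ∈ Q`, the exponents add up, the top iterated ad's multiply with a binomial
coefficient, and consequently `L_{qq'} = L_q·L_{q'}` and `L_{qq',0} = L_{q,0}·L_{q',0}`. -/
theorem stmt12
    {k A M : Type*} [Field k] [CharZero k] [Ring A] [IsDomain A] [Algebra k A]
    [AddCommGroup M] [Module A M]
    (B R : Subalgebra k A) (hRB : R ≤ B)
    (hRcomm : ∀ x ∈ R, ∀ y ∈ R, x * y = y * x)
    (S : Set A) (hSR : S ⊆ (R : Set A)) (hS0 : (0 : A) ∉ S) (hS1 : (1 : A) ∈ S)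
    (hSmul : ∀ s ∈ S, ∀ t ∈ S, s * t ∈ S)
    (hSunit : ∀ s ∈ S, IsUnit s)
    (hleft : ∀ a : A, ∃ s ∈ S, s * a ∈ B)
    (hright : ∀ a : A, ∃ s ∈ S, a * s ∈ B)
    (U₀ : Set M) (hU₀0 : (0 : M) ∈ U₀)
    (hU₀add : ∀ u ∈ U₀, ∀ v ∈ U₀, u + v ∈ U₀)
    (hU₀neg : ∀ u ∈ U₀, -u ∈ U₀)
    (hU₀R : ∀ r ∈ (R : Set A), ∀ u ∈ U₀, r • u ∈ U₀)
    (hB : ∀ a : A, a ∈ B ↔ ∀ u ∈ U₀, a • u ∈ U₀)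
    (L₀ : A) (hL₀ : L₀ ∈ B)
    (hnil : ∀ b ∈ B, ∃ n : ℕ, (adOp L₀ L₀)^[n] b = 0)
    (L : A) (h2 : cond2 B S L₀ L)
    (U : Set M) (hU : isSubspace k A U)
    (hLU : ∀ u ∈ U, L • u ∈ U)
    (hcond1b : ∃ s ∈ S, (∀ u ∈ U₀, s • u ∈ U) ∧ (∀ u ∈ U, s • u ∈ U₀))
    (q q' : A)
    (hq : q ∈ R) (hqU : ∀ u ∈ U, q • u ∈ U) (hq0 : q ≠ 0)
    (hq' : q' ∈ R) (hq'U : ∀ u ∈ U, q' • u ∈ U) (hq'0 : q' ≠ 0)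
    (Nq Nq' Nq₀ Nq'₀ : ℕ)
    (hNq : (adOp L L)^[Nq + 1] q = 0) (hNq' : (adOp L L)^[Nq] q ≠ 0)
    (hMq : (adOp L L)^[Nq' + 1] q' = 0) (hMq' : (adOp L L)^[Nq'] q' ≠ 0)
    (hNq₀ : (adOp L₀ L₀)^[Nq₀ + 1] q = 0) (hNq₀' : (adOp L₀ L₀)^[Nq₀] q ≠ 0)
    (hMq₀ : (adOp L₀ L₀)^[Nq'₀ + 1] q' = 0) (hMq₀' : (adOp L₀ L₀)^[Nq'₀] q' ≠ 0) :
    -- q·q' lies in Q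
    (q * q' ∈ R ∧ ∀ u ∈ U, (q * q') • u ∈ U) ∧
    -- N_{qq'} = N_q + N_{q'}
    ((adOp L L)^[Nq + Nq' + 1] (q * q') = 0 ∧ (adOp L L)^[Nq + Nq'] (q * q') ≠ 0) ∧
    -- N_{qq',0} = N_{q,0} + N_{q',0}
    ((adOp L₀ L₀)^[Nq₀ + Nq'₀ + 1] (q * q') = 0 ∧
      (adOp L₀ L₀)^[Nq₀ + Nq'₀] (q * q') ≠ 0) ∧
    -- binomial product formulas
    ((adOp L L)^[Nq + Nq'] (q * q') =
      (Nq + Nq').choose Nq • ((adOp L L)^[Nq] q * (adOp L L)^[Nq'] q')) ∧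
    ((adOp L₀ L₀)^[Nq₀ + Nq'₀] (q * q') =
      (Nq₀ + Nq'₀).choose Nq₀ • ((adOp L₀ L₀)^[Nq₀] q * (adOp L₀ L₀)^[Nq'₀] q')) ∧
    -- equivalently, L_{qq'} = L_q · L_{q'}
    (∀ Lq Lq' Lqq' : A,
      Nq.factorial • Lq = (adOp L L)^[Nq] q →
      Nq'.factorial • Lq' = (adOp L L)^[Nq'] q' →
      (Nq + Nq').factorial • Lqq' = (adOp L L)^[Nq + Nq'] (q * q') →
      Lqq' = Lq * Lq') ∧
    -- and L_{qq',0} = L_{q,0} · L_{q',0}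
    (∀ Lq Lq' Lqq' : A,
      Nq₀.factorial • Lq = (adOp L₀ L₀)^[Nq₀] q →
      Nq'₀.factorial • Lq' = (adOp L₀ L₀)^[Nq'₀] q' →
      (Nq₀ + Nq'₀).factorial • Lqq' = (adOp L₀ L₀)^[Nq₀ + Nq'₀] (q * q') →
      Lqq' = Lq * Lq') := by
  refine ⟨⟨mul_mem hq hq', fun u hu => ?_⟩,
    ⟨adOp_top_succ L q q' hNq hMq, adOp_top_ne_zero k L q q' hNq hNq' hMq hMq'⟩,
    ⟨adOp_top_succ L₀ q q' hNq₀ hMq₀, adOp_top_ne_zero k L₀ q q' hNq₀ hNq₀' hMq₀ hMq₀'⟩,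
    adOp_top L q q' hNq hMq, adOp_top L₀ q q' hNq₀ hMq₀,
    fun Lq Lq' Lqq' h1 h2 h3 => adOp_factorial_mul k L q q' Lq Lq' Lqq' hNq hMq h1 h2 h3,
    fun Lq Lq' Lqq' h1 h2 h3 => adOp_factorial_mul k L₀ q q' Lq Lq' Lqq' hNq₀ hMq₀ h1 h2 h3⟩
  rw [mul_smul]
  exact hqU _ (hq'U u hu)
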